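/- Let E be a field of characteristic ≠ 2 and q = ⟨1, a, b, ab⟩ a rank-4 quadratic form over E with trivial discriminant. Let D = (−a, −b)_E be the associated quaternion algebra. Then the image of the spinor norm map of q equals Nrd(D*) modulo squares: Sn(q_E) = Nrd(D*)·E*²/E*². -/

import Mathlib

open scoped Quaternion

private lemma normE {E : Type*} [Field E] {a b : E} (x : ℍ[E,-a,-b]) :
    (x * star x).re = x.re^2 + a*x.imI^2 + b*x.imJ^2 + a*b*x.imK^2 := by
  simp only [QuaternionAlgebra.re_mul, QuaternionAlgebra.re_star,
    QuaternionAlgebra.imI_star, QuaternionAlgebra.imJ_star, QuaternionAlgebra.imK_star]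
  ring

private lemma normMul {E : Type*} [Field E] {a b : E} (x y : ℍ[E,-a,-b]) :
    ((x*y) * star (x*y)).re = (x * star x).re * (y * star y).re := by
  rw [normE, normE, normE]
  simp only [QuaternionAlgebra.re_mul, QuaternionAlgebra.imI_mul,
    QuaternionAlgebra.imJ_mul, QuaternionAlgebra.imK_mul]
  ring

private lemma normProd {E : Type*} [Field E] {a b : E} (l : List (Fin 4 → E)) :
    (((l.map fun v => (⟨v 0, v 1, v 2, v 3⟩ : ℍ[E,-a,-b])).prod) *
      star ((l.map fun v => (⟨v 0, v 1, v 2, v 3⟩ : ℍ[E,-a,-b])).prod)).re =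
    (l.map fun v => v 0 ^ 2 + a * v 1 ^ 2 + b * v 2 ^ 2 + a * b * v 3 ^ 2).prod := by
  induction l with
  | nil =>
      simp [normE]
  | cons v t ih =>
      rw [List.map_cons, List.map_cons, List.prod_cons, List.prod_cons, normMul, ih, normE]

/-- **Spinor norms of a rank-4 form with trivial discriminant.**
Let `E` be a field of characteristic `≠ 2` and `q = ⟨1, a, b, ab⟩` a rank-4
quadratic form over `E` with trivial discriminant.  Let `D = (−a, −b)_E` be the
associated quaternion algebra, with reduced norm `Nrd`.  Then the image of the
spinor norm map of `q` (the classes of products `q(v₁)⋯q(v₂ₘ)` over even numbers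
of anisotropic vectors) equals `Nrd(D*)` modulo squares:
`Sn(q_E) = Nrd(D*)·E*²/E*²`. -/
theorem spinor_norms_rank_four_trivial_discriminant
    (E : Type*) [Field E] (hchar : (2 : E) ≠ 0)
    (a b : E) (ha : a ≠ 0) (hb : b ≠ 0) :
    ∀ α : E, α ≠ 0 →
      ((∃ l : List (Fin 4 → E), Even l.length ∧
          (∀ v ∈ l, v 0 ^ 2 + a * v 1 ^ 2 + b * v 2 ^ 2 + a * b * v 3 ^ 2 ≠ 0) ∧
          ∃ c : E, c ≠ 0 ∧
            α = (l.map fun v =>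
              v 0 ^ 2 + a * v 1 ^ 2 + b * v 2 ^ 2 + a * b * v 3 ^ 2).prod
              * c ^ 2) ↔
        (∃ (x : ℍ[E, -a, -b]) (c : E), x ≠ 0 ∧ c ≠ 0 ∧
          α = (x * star x).re * c ^ 2)) := by
  intro α hα
  constructor
  · rintro ⟨l, -, -, c, hc, hval⟩
    refine ⟨(l.map fun v => (⟨v 0, v 1, v 2, v 3⟩ : ℍ[E,-a,-b])).prod, c, ?_, hc, ?_⟩
    · -- nonzero since its norm is nonzero
      intro h0
      apply hα
      rw [hval, ← normProd, h0]
      simp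
    · rw [hval, normProd]
  · rintro ⟨x, c, hx, hc, hval⟩
    have hN : (x * star x).re ≠ 0 := by
      intro h0
      exact hα (by rw [hval, h0, zero_mul])
    refine ⟨[![x.re, x.imI, x.imJ, x.imK], ![1, 0, 0, 0]], by simp, ?_, c, hc, ?_⟩
    · intro v hv
      simp only [List.mem_cons, List.not_mem_nil, or_false] at hv
      rcases hv with rfl | rfl
      · simpa [normE, sq, mul_assoc] using hN
      · simp
    · rw [hval]
      congr 1
      simp only [List.map_cons, List.map_nil, List.prod_cons, List.prod_nil, normE]
      simp
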